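/- arXiv:2602.20769 — 2 statements merged into one kernel-verified Lean document; each statement's English description precedes it below -/
import Mathlib

section
/- Let V and H be real Hilbert spaces, let j : V → H be a continuous linear map (modelling the embedding V ↪ H of a Gelfand triple, under which the duality pairing ⟨·,·⟩_{V*,V} of elements of H against elements of V is realized as the H-inner product ⟪j·, j·⟫_H). Let B : V × V → ℝ be a continuous bilinear form satisfying the quasi-coercivity bound B(v,v) ≥ α‖v‖_V² − ω‖j v‖_H² for all v ∈ V, where α > 0 and ω ≥ 0. Let I : H → H be a continuous linear map and C > 0, δ > 0 constants such that ⟪x − I x, j g⟫_H ≤ C δ ‖x‖_H ‖g‖_V for all x ∈ H and g ∈ V. Then for every ε > 0, every μ ≥ 0 and every v ∈ V one has B(v,v) + μ ⟪I(j v), j v⟫_H ≥ (α − ε) ‖v‖_V² + (μ − C² μ² δ² / (4ε) − ω) ‖j v‖_H². -/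
open scoped RealInnerProductSpace

/-- Coercivity computation for the nudged operator `A + μ I_δ`. -/
theorem stmt_0
    {V H : Type*} [NormedAddCommGroup V] [InnerProductSpace ℝ V] [CompleteSpace V]
    [NormedAddCommGroup H] [InnerProductSpace ℝ H] [CompleteSpace H]
    (j : V →L[ℝ] H)
    (B : V →L[ℝ] V →L[ℝ] ℝ)
    (α ω : ℝ) (hα : 0 < α) (hω : 0 ≤ ω)
    (hB : ∀ v : V, B v v ≥ α * ‖v‖ ^ 2 - ω * ‖j v‖ ^ 2)
    (I : H →L[ℝ] H) (C δ : ℝ) (hC : 0 < C) (hδ : 0 < δ)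
    (hI : ∀ (x : H) (g : V), ⟪x - I x, j g⟫ ≤ C * δ * ‖x‖ * ‖g‖) :
    ∀ ε > (0 : ℝ), ∀ μ ≥ (0 : ℝ), ∀ v : V,
      B v v + μ * ⟪I (j v), j v⟫ ≥
        (α - ε) * ‖v‖ ^ 2 + (μ - C ^ 2 * μ ^ 2 * δ ^ 2 / (4 * ε) - ω) * ‖j v‖ ^ 2 := by
  intro ε hε μ hμ v
  have h1 : ⟪I (j v), j v⟫ = ‖j v‖ ^ 2 - ⟪j v - I (j v), j v⟫ := by
    rw [inner_sub_left, real_inner_self_eq_norm_sq]; ring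
  have h2 : ⟪j v - I (j v), j v⟫ ≤ C * δ * ‖j v‖ * ‖v‖ := hI (j v) v
  have h3 : μ * (C * δ * ‖j v‖ * ‖v‖) ≤ ε * ‖v‖ ^ 2 + C ^ 2 * μ ^ 2 * δ ^ 2 / (4 * ε) * ‖j v‖ ^ 2 := by
    have hε4 : (0:ℝ) < 4 * ε := by linarith
    have heq : ε * ‖v‖ ^ 2 + C ^ 2 * μ ^ 2 * δ ^ 2 / (4 * ε) * ‖j v‖ ^ 2
        - μ * (C * δ * ‖j v‖ * ‖v‖)
        = (2 * ε * ‖v‖ - μ * C * δ * ‖j v‖) ^ 2 / (4 * ε) := by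
      field_simp
      ring
    linarith [div_nonneg (sq_nonneg (2 * ε * ‖v‖ - μ * C * δ * ‖j v‖)) hε4.le]
  have h4 : μ * ⟪j v - I (j v), j v⟫ ≤ μ * (C * δ * ‖j v‖ * ‖v‖) :=
    mul_le_mul_of_nonneg_left h2 hμ
  have hB' := hB v
  rw [h1]
  nlinarith [h3, h4, hB']
end

section
/- Let V and H be real Hilbert spaces, let j : V → H be a continuous linear map (modelling the embedding V ↪ H of a Gelfand triple, under which the duality pairing ⟨·,·⟩_{V*,V} of elements of H against elements of V is realized as the H-inner product ⟪j·, j·⟫_H). Let B : V × V → ℝ be a continuous bilinear form satisfying B(v,v) ≥ α‖v‖_V² − ω‖j v‖_H² for all v ∈ V, where α > 0 and ω ≥ 0. Let I : H → H be a continuous linear map and C > 0, δ > 0 constants such that ⟪x − I x, j g⟫_H ≤ C δ ‖x‖_H ‖g‖_V for all x ∈ H and g ∈ V. If the nudging parameter μ satisfies μ > ω and the resolution satisfies δ² ≤ 2α(μ − ω)/(C² μ²), then the nudged form is coercive with no lower-order defect: B(v,v) + μ ⟪I(j v), j v⟫_H ≥ (α/2) ‖v‖_V² for all v ∈ V. In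 particular, the operator v ↦ A v + μ I_δ v satisfies assumption (A1) with ω = 0. -/
open scoped RealInnerProductSpace

/-- Coercivity (with no lower-order defect) of the nudged form for suitable `μ`, `δ`. -/
theorem stmt_1
    {V H : Type*} [NormedAddCommGroup V] [InnerProductSpace ℝ V] [CompleteSpace V]
    [NormedAddCommGroup H] [InnerProductSpace ℝ H] [CompleteSpace H]
    (j : V →L[ℝ] H)
    (B : V →L[ℝ] V →L[ℝ] ℝ)
    (α ω : ℝ) (hα : 0 < α) (hω : 0 ≤ ω)
    (hB : ∀ v : V, B v v ≥ α * ‖v‖ ^ 2 - ω * ‖j v‖ ^ 2)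
    (I : H →L[ℝ] H) (C δ : ℝ) (hC : 0 < C) (hδ : 0 < δ)
    (hI : ∀ (x : H) (g : V), ⟪x - I x, j g⟫ ≤ C * δ * ‖x‖ * ‖g‖)
    (μ : ℝ) (hμ : μ > ω) (hδμ : δ ^ 2 ≤ 2 * α * (μ - ω) / (C ^ 2 * μ ^ 2)) :
    ∀ v : V, B v v + μ * ⟪I (j v), j v⟫ ≥ (α / 2) * ‖v‖ ^ 2 := by
  intro v
  have hμ0 : 0 < μ := lt_of_le_of_lt hω hμ
  have h1 := hB v
  have h2 := hI (j v) v
  have hsplit : ⟪I (j v), j v⟫ = ‖j v‖ ^ 2 - ⟪j v - I (j v), j v⟫ := by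
    rw [inner_sub_left, real_inner_self_eq_norm_sq]; ring
  have hpos : (0:ℝ) < C ^ 2 * μ ^ 2 := by positivity
  have key : δ ^ 2 * (C ^ 2 * μ ^ 2) ≤ 2 * α * (μ - ω) := (le_div_iff₀ hpos).mp hδμ
  have ha : (0:ℝ) ≤ ‖v‖ := norm_nonneg v
  have hb : (0:ℝ) ≤ ‖j v‖ := norm_nonneg (j v)
  rw [hsplit]
  nlinarith [sq_nonneg (2 * (μ - ω) * ‖j v‖ - μ * C * δ * ‖v‖),
    mul_le_mul_of_nonneg_left h2 hμ0.le,
    mul_le_mul_of_nonneg_right key (mul_self_nonneg ‖v‖),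
    sub_pos.mpr hμ, sq_nonneg (‖v‖ * ‖j v‖)]
end
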